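/- For all n ≥ 0 and k ≥ 1, the Bessel numbers of the second kind satisfy B(n,k-1) · B(n,k+1) ≤ B(n,k)², i.e., the sequence {B(n,k)}_{k≥0} is log-concave. -/
import Mathlib


/-- `besselB n k` is the number of set partitions of `[n]` into `k` blocks,
each of size one or two (the Bessel number of the second kind). -/
noncomputable def besselB (n k : ℕ) : ℕ :=
  Nat.card {P : Finset (Finset (Fin n)) //
    (∀ b ∈ P, b.card = 1 ∨ b.card = 2) ∧
    (∀ i : Fin n, ∃! b, b ∈ P ∧ i ∈ b) ∧
    P.card = k}

namespace BesselAux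

open Finset

def Pred (n k : ℕ) (P : Finset (Finset (Fin n))) : Prop :=
  (∀ b ∈ P, b.card = 1 ∨ b.card = 2) ∧
  (∀ i : Fin n, ∃! b, b ∈ P ∧ i ∈ b) ∧
  P.card = k

variable {n m k : ℕ} {P : Finset (Finset (Fin n))}

theorem Pred.disj (h : Pred n k P) {b b' : Finset (Fin n)} (hb : b ∈ P) (hb' : b' ∈ P)
    (hne : b ≠ b') : Disjoint b b' := by
  rw [Finset.disjoint_left]
  intro x hx hx'
  obtain ⟨c, _, hu⟩ := h.2.1 x
  exact hne ((hu b ⟨hb, hx⟩).trans (hu b' ⟨hb', hx'⟩).symm)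

theorem Pred.sum_card (h : Pred n k P) : ∑ b ∈ P, b.card = n := by
  have : P.biUnion id = Finset.univ := by
    ext x
    simp only [mem_biUnion, id, mem_univ, iff_true]
    obtain ⟨c, ⟨hc, hx⟩, _⟩ := h.2.1 x
    exact ⟨c, hc, hx⟩
  calc ∑ b ∈ P, b.card = (P.biUnion id).card :=
        (Finset.card_biUnion fun b hb b' hb' hne => h.disj hb hb' hne).symm
    _ = n := by rw [this]; simp

theorem Pred.struct (h : Pred n k P) :
    (P.filter fun b => b.card = 2).card = n - k ∧ n ≤ 2 * k ∧ k ≤ n := by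
  have hsplit := Finset.card_filter_add_card_filter_not
    (s := P) (p := fun b => b.card = 2)
  have hsum : ∑ b ∈ P, b.card = 2 * (P.filter fun b => b.card = 2).card
      + (P.filter fun b => ¬ b.card = 2).card := by
    rw [← Finset.sum_filter_add_sum_filter_not P (fun b => b.card = 2)]
    have h1 : ∑ b ∈ P.filter (fun b => b.card = 2), b.card
        = 2 * (P.filter fun b => b.card = 2).card := by
      rw [Finset.sum_congr rfl (fun b hb => (Finset.mem_filter.1 hb).2), Finset.sum_const,
        smul_eq_mul, mul_comm]
    have h2 : ∑ b ∈ P.filter (fun b => ¬ b.card = 2), b.card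
        = (P.filter fun b => ¬ b.card = 2).card := by
      rw [Finset.sum_congr rfl (fun b hb => ?_), Finset.sum_const, smul_eq_mul, mul_one]
      have := Finset.mem_filter.1 hb
      rcases h.1 b this.1 with h1 | h2
      · exact h1
      · exact absurd h2 this.2
    rw [h1, h2]
  rw [h.sum_card] at hsum
  rw [h.2.2] at hsplit
  omega

def e0 (i : Fin m) : Fin (2 * m) := ⟨2 * i.1, by omega⟩
def e1 (i : Fin m) : Fin (2 * m) := ⟨2 * i.1 + 1, by omega⟩

theorem e_decomp (j : Fin (2 * m)) :
    j = e0 ⟨j.1 / 2, by have := j.2; omega⟩ ∨ j = e1 ⟨j.1 / 2, by have := j.2; omega⟩ := by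
  rcases Nat.mod_two_eq_zero_or_one j.1 with h | h
  · left; apply Fin.ext; simp only [e0]; omega
  · right; apply Fin.ext; simp only [e1]; omega

/-- the pair blocks of an embedding -/
def pairs (f : Fin (2 * m) ↪ Fin n) : Finset (Finset (Fin n)) :=
  Finset.univ.image fun i : Fin m => ({f (e0 i), f (e1 i)} : Finset (Fin n))

/-- the full partition associated to an embedding -/
def parts (f : Fin (2 * m) ↪ Fin n) : Finset (Finset (Fin n)) :=
  pairs f ∪ (Finset.univ.map f)ᶜ.image fun x => ({x} : Finset (Fin n))

theorem e0_ne_e1 (i i' : Fin m) : e0 i ≠ e1 i' := by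
  intro h
  have := congrArg Fin.val h
  simp [e0, e1] at this
  omega

theorem e0_inj {i i' : Fin m} (h : e0 i = e0 i') : i = i' := by
  have := congrArg Fin.val h; simp [e0] at this; exact Fin.ext this

theorem e1_inj {i i' : Fin m} (h : e1 i = e1 i') : i = i' := by
  have := congrArg Fin.val h; simp [e1] at this; exact Fin.ext this

theorem pair_card (f : Fin (2 * m) ↪ Fin n) (i : Fin m) :
    ({f (e0 i), f (e1 i)} : Finset (Fin n)).card = 2 := by
  rw [Finset.card_pair]
  exact fun h => e0_ne_e1 i i (f.injective h)

theorem mem_pairs_of_f {f : Fin (2 * m) ↪ Fin n} {x : Fin n} (hx : x ∈ Finset.univ.map f) :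
    ∃ i : Fin m, x ∈ ({f (e0 i), f (e1 i)} : Finset (Fin n)) := by
  simp only [Finset.mem_map, mem_univ, true_and] at hx
  obtain ⟨j, rfl⟩ := hx
  rcases e_decomp j with h | h
  · exact ⟨⟨j.1 / 2, by have := j.2; omega⟩, by rw [congrArg f h]; simp⟩
  · exact ⟨⟨j.1 / 2, by have := j.2; omega⟩, by rw [congrArg f h]; simp⟩

theorem block_unique {f : Fin (2 * m) ↪ Fin n} {x : Fin n} {i i' : Fin m}
    (h : x ∈ ({f (e0 i), f (e1 i)} : Finset (Fin n)))
    (h' : x ∈ ({f (e0 i'), f (e1 i')} : Finset (Fin n))) : i = i' := by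
  simp only [Finset.mem_insert, Finset.mem_singleton] at h h'
  rcases h with rfl | rfl <;> rcases h' with h' | h' <;>
    first
    | exact e0_inj (f.injective h')
    | exact e1_inj (f.injective h')
    | exact absurd (f.injective h') (e0_ne_e1 _ _)
    | exact absurd (f.injective h'.symm) (e0_ne_e1 _ _)

theorem parts_valid (hm : 2 * m ≤ n) (f : Fin (2 * m) ↪ Fin n) : Pred n (n - m) (parts f) := by
  refine ⟨?_, ?_, ?_⟩
  · intro b hb
    rcases Finset.mem_union.1 hb with hb | hb
    · obtain ⟨i, _, rfl⟩ := Finset.mem_image.1 hb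
      exact Or.inr (pair_card f i)
    · obtain ⟨x, _, rfl⟩ := Finset.mem_image.1 hb
      exact Or.inl (Finset.card_singleton x)
  · intro x
    by_cases hx : x ∈ Finset.univ.map f
    · obtain ⟨i, hi⟩ := mem_pairs_of_f hx
      refine ⟨{f (e0 i), f (e1 i)}, ⟨Finset.mem_union_left _ (Finset.mem_image.2 ⟨i, mem_univ _, rfl⟩), hi⟩, ?_⟩
      rintro b ⟨hb, hxb⟩
      rcases Finset.mem_union.1 hb with hb | hb
      · obtain ⟨i', _, rfl⟩ := Finset.mem_image.1 hb
        rw [block_unique hxb hi]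
      · obtain ⟨y, hy, rfl⟩ := Finset.mem_image.1 hb
        rw [Finset.mem_singleton] at hxb
        rw [Finset.mem_compl] at hy
        exact absurd (hxb ▸ hx) hy
    · refine ⟨{x}, ⟨Finset.mem_union_right _ (Finset.mem_image.2 ⟨x, Finset.mem_compl.2 hx, rfl⟩), Finset.mem_singleton_self x⟩, ?_⟩
      rintro b ⟨hb, hxb⟩
      rcases Finset.mem_union.1 hb with hb | hb
      · obtain ⟨i', _, rfl⟩ := Finset.mem_image.1 hb
        simp only [Finset.mem_insert, Finset.mem_singleton] at hxb
        rcases hxb with rfl | rfl <;>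
          exact absurd (Finset.mem_map_of_mem f (mem_univ _)) hx
      · obtain ⟨y, _, rfl⟩ := Finset.mem_image.1 hb
        rw [Finset.mem_singleton] at hxb
        rw [hxb]
  · have hdisj : Disjoint (pairs f) ((Finset.univ.map f)ᶜ.image fun x => ({x} : Finset (Fin n))) := by
      rw [Finset.disjoint_left]
      intro b hb hb'
      obtain ⟨i, _, rfl⟩ := Finset.mem_image.1 hb
      obtain ⟨y, _, hy⟩ := Finset.mem_image.1 hb'
      have := congrArg Finset.card hy
      rw [Finset.card_singleton] at this
      rw [pair_card f i] at this
      omega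
    rw [parts, Finset.card_union_of_disjoint hdisj]
    have h1 : (pairs f).card = m := by
      rw [pairs, Finset.card_image_of_injective _ ?_, Finset.card_univ, Fintype.card_fin]
      intro i i' h
      simp only at h
      have hx : f (e0 i) ∈ ({f (e0 i'), f (e1 i')} : Finset (Fin n)) := by
        rw [← h]; simp
      exact block_unique (by simp) hx
    have h2 : ((Finset.univ.map f)ᶜ.image fun x => ({x} : Finset (Fin n))).card = n - 2 * m := by
      rw [Finset.card_image_of_injective _ fun a b h => Finset.singleton_injective h,
        Finset.card_compl, Finset.card_map, Finset.card_univ, Fintype.card_fin, Fintype.card_fin]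
    rw [h1, h2]
    omega



theorem card_pairs (f : Fin (2 * m) ↪ Fin n) : (pairs f).card = m := by
  rw [pairs, Finset.card_image_of_injective _ ?_, Finset.card_univ, Fintype.card_fin]
  intro i i' h
  simp only at h
  have hx : f (e0 i) ∈ ({f (e0 i'), f (e1 i')} : Finset (Fin n)) := by
    rw [← h]; simp
  exact block_unique (by simp) hx

theorem pairs_eq_filter (hm : 2 * m ≤ n) (hP : Pred n (n - m) P)
    (f : Fin (2 * m) ↪ Fin n) (hf : ∀ i, ({f (e0 i), f (e1 i)} : Finset (Fin n)) ∈ P) :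
    pairs f = P.filter fun b => b.card = 2 := by
  have hsub : pairs f ⊆ P.filter fun b => b.card = 2 := by
    intro b hb
    obtain ⟨i, _, rfl⟩ := Finset.mem_image.1 hb
    exact Finset.mem_filter.2 ⟨hf i, pair_card f i⟩
  refine Finset.eq_of_subset_of_card_le hsub ?_
  rw [card_pairs, hP.struct.1]
  omega

theorem parts_eq (hm : 2 * m ≤ n) (hP : Pred n (n - m) P)
    (f : Fin (2 * m) ↪ Fin n) (hf : ∀ i, ({f (e0 i), f (e1 i)} : Finset (Fin n)) ∈ P) :
    parts f = P := by
  have hfilter := pairs_eq_filter hm hP f hf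
  apply Finset.Subset.antisymm
  · intro b hb
    rcases Finset.mem_union.1 hb with hb | hb
    · obtain ⟨i, _, rfl⟩ := Finset.mem_image.1 hb
      exact hf i
    · obtain ⟨x, hx, rfl⟩ := Finset.mem_image.1 hb
      rw [Finset.mem_compl] at hx
      obtain ⟨c, ⟨hc, hxc⟩, hu⟩ := hP.2.1 x
      rcases hP.1 c hc with h1 | h2
      · obtain ⟨y, hy⟩ := Finset.card_eq_one.1 h1
        rw [hy] at hxc
        rw [Finset.mem_singleton] at hxc
        rw [← hxc] at hy
        rwa [← hy]
      · exfalso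
        have : c ∈ pairs f := by
          rw [hfilter]; exact Finset.mem_filter.2 ⟨hc, h2⟩
        obtain ⟨i, _, rfl⟩ := Finset.mem_image.1 this
        simp only [Finset.mem_insert, Finset.mem_singleton] at hxc
        rcases hxc with rfl | rfl <;>
          exact hx (Finset.mem_map_of_mem f (mem_univ _))
  · intro b hb
    rcases hP.1 b hb with h1 | h2
    · obtain ⟨x, rfl⟩ := Finset.card_eq_one.1 h1
      apply Finset.mem_union_right
      refine Finset.mem_image.2 ⟨x, Finset.mem_compl.2 ?_, rfl⟩
      intro hx
      obtain ⟨i, hi⟩ := mem_pairs_of_f hx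
      obtain ⟨c, _, hu⟩ := hP.2.1 x
      have h1 := hu _ ⟨hf i, hi⟩
      have h2 := hu _ ⟨hb, Finset.mem_singleton_self x⟩
      have := h2.trans h1.symm
      have hcard := congrArg Finset.card this
      rw [Finset.card_singleton, pair_card] at hcard
      omega
    · apply Finset.mem_union_left
      rw [hfilter]
      exact Finset.mem_filter.2 ⟨hb, h2⟩


theorem pair_min_max {s : Finset (Fin n)} (hs : s.card = 2) (hne : s.Nonempty) :
    ({s.min' hne, s.max' hne} : Finset (Fin n)) = s := by
  have hlt : s.min' hne < s.max' hne := Finset.min'_lt_max'_of_card s (by omega)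
  apply Finset.eq_of_subset_of_card_le
  · intro x hx
    simp only [Finset.mem_insert, Finset.mem_singleton] at hx
    rcases hx with rfl | rfl
    · exact s.min'_mem hne
    · exact s.max'_mem hne
  · have : ({s.min' hne, s.max' hne} : Finset (Fin n)).card = 2 := Finset.card_pair hlt.ne
    omega

theorem pairBlock_inj {f : Fin (2 * m) ↪ Fin n} {i i' : Fin m}
    (h : ({f (e0 i), f (e1 i)} : Finset (Fin n)) = {f (e0 i'), f (e1 i')}) : i = i' :=
  block_unique (Finset.mem_insert_self _ _) (by rw [← h]; simp)

theorem fiber_card (hm : 2 * m ≤ n) (hP : Pred n (n - m) P) :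
    Nat.card {f : Fin (2 * m) ↪ Fin n // ∀ i, ({f (e0 i), f (e1 i)} : Finset (Fin n)) ∈ P}
      = m.factorial * 2 ^ m := by
  classical
  set Q := P.filter fun b => b.card = 2 with hQ
  have hQcard : Q.card = m := by
    rw [hQ]
    have := hP.struct
    omega
  set fwd : {f : Fin (2 * m) ↪ Fin n // ∀ i, ({f (e0 i), f (e1 i)} : Finset (Fin n)) ∈ P}
      → (Fin m ↪ {b // b ∈ Q}) × (Fin m → Bool) := fun f =>
    (⟨fun i => ⟨{f.1 (e0 i), f.1 (e1 i)}, Finset.mem_filter.2 ⟨f.2 i, pair_card f.1 i⟩⟩,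
      fun i i' h => pairBlock_inj (congrArg Subtype.val h)⟩,
     fun i => decide (f.1 (e0 i) < f.1 (e1 i))) with hfwd
  have hinj : Function.Injective fwd := by
    rintro ⟨f, hf⟩ ⟨f', hf'⟩ h
    rw [Prod.ext_iff] at h
    obtain ⟨h1, h2⟩ := h
    have hblk : ∀ i : Fin m,
        ({f (e0 i), f (e1 i)} : Finset (Fin n)) = {f' (e0 i), f' (e1 i)} := fun i =>
      congrArg Subtype.val (DFunLike.congr_fun h1 i)
    have hbit : ∀ i : Fin m, (f (e0 i) < f (e1 i)) ↔ (f' (e0 i) < f' (e1 i)) := fun i =>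
      decide_eq_decide.1 (congrFun h2 i)
    have key : ∀ i : Fin m, f (e0 i) = f' (e0 i) ∧ f (e1 i) = f' (e1 i) := by
      intro i
      have hab : f (e0 i) ≠ f (e1 i) := fun hc => e0_ne_e1 i i (f.injective hc)
      have hcd : f' (e0 i) ≠ f' (e1 i) := fun hc => e0_ne_e1 i i (f'.injective hc)
      have hm0 : f (e0 i) ∈ ({f' (e0 i), f' (e1 i)} : Finset (Fin n)) := by
        rw [← hblk i]; simp
      have hm1 : f (e1 i) ∈ ({f' (e0 i), f' (e1 i)} : Finset (Fin n)) := by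
        rw [← hblk i]; simp
      simp only [Finset.mem_insert, Finset.mem_singleton] at hm0 hm1
      rcases hm0 with h0 | h0
      · refine ⟨h0, ?_⟩
        rcases hm1 with h1' | h1'
        · exact absurd (h0 ▸ h1' ▸ rfl : f (e0 i) = f (e1 i)) hab
        · exact h1'
      · exfalso
        rcases hm1 with h1' | h1'
        · have hiff := hbit i
          rw [h0, h1'] at hiff
          rcases lt_trichotomy (f' (e0 i)) (f' (e1 i)) with hlt | heq | hgt
          · exact absurd (hiff.2 hlt) (lt_asymm hlt)
          · exact hcd heq
          · exact absurd (hiff.1 hgt) (lt_asymm hgt)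
        · exact hab (h0.trans h1'.symm)
    apply Subtype.ext
    apply DFunLike.ext
    intro j
    rcases e_decomp j with hj | hj
    · rw [hj]; exact (key _).1
    · rw [hj]; exact (key _).2
  have hsurj : Function.Surjective fwd := by
    rintro ⟨σ, bts⟩
    have hblkP : ∀ i : Fin m, (σ i).1 ∈ P := fun i => (Finset.mem_filter.1 (σ i).2).1
    have hblk2 : ∀ i : Fin m, ((σ i).1 : Finset (Fin n)).card = 2 :=
      fun i => (Finset.mem_filter.1 (σ i).2).2
    have hne : ∀ i : Fin m, ((σ i).1 : Finset (Fin n)).Nonempty := by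
      intro i; rw [← Finset.card_pos, hblk2 i]; norm_num
    set lo : Fin m → Fin n := fun i => (σ i).1.min' (hne i) with hlo
    set hi : Fin m → Fin n := fun i => (σ i).1.max' (hne i) with hhi
    have hlt : ∀ i, lo i < hi i := fun i =>
      Finset.min'_lt_max'_of_card _ (by rw [hblk2 i]; norm_num)
    set x0 : Fin m → Fin n := fun i => if bts i then lo i else hi i with hx0
    set x1 : Fin m → Fin n := fun i => if bts i then hi i else lo i with hx1
    have hx0mem : ∀ i, x0 i ∈ (σ i).1 := by
      intro i; rw [hx0]; dsimp only
      split
      · exact Finset.min'_mem _ _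
      · exact Finset.max'_mem _ _
    have hx1mem : ∀ i, x1 i ∈ (σ i).1 := by
      intro i; rw [hx1]; dsimp only
      split
      · exact Finset.max'_mem _ _
      · exact Finset.min'_mem _ _
    have hx01 : ∀ i, x0 i ≠ x1 i := by
      intro i; rw [hx0, hx1]; dsimp only
      split
      · exact (hlt i).ne
      · exact (hlt i).ne'
    have hpairx : ∀ i, ({x0 i, x1 i} : Finset (Fin n)) = (σ i).1 := by
      intro i; rw [hx0, hx1]; dsimp only
      split
      · exact pair_min_max (hblk2 i) (hne i)
      · rw [Finset.pair_comm]; exact pair_min_max (hblk2 i) (hne i)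
    have hblkdisj : ∀ i i' : Fin m, i ≠ i' → Disjoint ((σ i).1 : Finset (Fin n)) (σ i').1 := by
      intro i i' hii
      refine hP.disj (hblkP i) (hblkP i') ?_
      intro hc
      exact hii (σ.injective (Subtype.ext hc))
    set g : Fin (2 * m) → Fin n := fun j =>
      if j.1 % 2 = 0 then x0 ⟨j.1 / 2, by have := j.2; omega⟩
      else x1 ⟨j.1 / 2, by have := j.2; omega⟩ with hg
    have hgmem : ∀ j : Fin (2 * m), g j ∈ (σ ⟨j.1 / 2, by have := j.2; omega⟩).1 := by
      intro j; rw [hg]; dsimp only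
      split
      · exact hx0mem _
      · exact hx1mem _
    have hginj : Function.Injective g := by
      intro j j' hjj
      have hii : (⟨j.1 / 2, by have := j.2; omega⟩ : Fin m)
          = ⟨j'.1 / 2, by have := j'.2; omega⟩ := by
        by_contra hc
        have := Finset.disjoint_left.1 (hblkdisj _ _ hc) (hgmem j)
        exact this (hjj ▸ hgmem j')
      have hdiv : j.1 / 2 = j'.1 / 2 := congrArg Fin.val hii
      by_cases hpar : j.1 % 2 = j'.1 % 2
      · exact Fin.ext (by omega)
      · exfalso
        rw [hg] at hjj
        dsimp only at hjj
        rcases Nat.mod_two_eq_zero_or_one j.1 with hj | hj <;>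
          rcases Nat.mod_two_eq_zero_or_one j'.1 with hj' | hj'
        · exact hpar (hj.trans hj'.symm)
        · rw [if_pos hj, if_neg (by omega)] at hjj
          exact hx01 _ ((congrArg x0 hii).symm.trans hjj)
        · rw [if_neg (by omega), if_pos hj'] at hjj
          exact hx01 _ ((congrArg x0 hii).trans hjj.symm)
        · exact hpar (hj.trans hj'.symm)
    have hg0 : ∀ i : Fin m, g (e0 i) = x0 i := by
      intro i
      have h1 : (e0 i).1 % 2 = 0 := by show 2 * i.1 % 2 = 0; omega
      have h2 : (e0 i).1 / 2 = i.1 := by show 2 * i.1 / 2 = i.1; omega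
      rw [hg]
      dsimp only
      rw [if_pos h1]
      congr 1
      exact Fin.ext h2
    have hg1 : ∀ i : Fin m, g (e1 i) = x1 i := by
      intro i
      have h1 : ¬((e1 i).1 % 2 = 0) := by show ¬((2 * i.1 + 1) % 2 = 0); omega
      have h2 : (e1 i).1 / 2 = i.1 := by show (2 * i.1 + 1) / 2 = i.1; omega
      rw [hg]
      dsimp only
      rw [if_neg h1]
      congr 1
      exact Fin.ext h2
    have hgpair : ∀ i : Fin m, ({g (e0 i), g (e1 i)} : Finset (Fin n)) = (σ i).1 := by
      intro i; rw [hg0, hg1, hpairx]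
    refine ⟨⟨⟨g, hginj⟩, fun i => by
      show ({g (e0 i), g (e1 i)} : Finset (Fin n)) ∈ P
      rw [hgpair]; exact hblkP i⟩, ?_⟩
    rw [hfwd]
    dsimp only
    refine Prod.ext ?_ ?_
    · apply DFunLike.ext
      intro i
      exact Subtype.ext (hgpair i)
    · funext i
      show decide (g (e0 i) < g (e1 i)) = bts i
      rw [hg0, hg1]
      by_cases hb : bts i
      · have ha : x0 i = lo i := by rw [hx0]; simp [hb]
        have hb2 : x1 i = hi i := by rw [hx1]; simp [hb]
        rw [ha, hb2, hb]
        exact decide_eq_true (hlt i)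
      · have ha : x0 i = hi i := by rw [hx0]; simp [hb]
        have hb2 : x1 i = lo i := by rw [hx1]; simp [hb]
        rw [ha, hb2, Bool.not_eq_true] at *
        rw [ha, hb2, hb]
        exact decide_eq_false (not_lt.2 (hlt i).le)
  have := Nat.card_congr (Equiv.ofBijective fwd ⟨hinj, hsurj⟩)
  rw [this, Nat.card_eq_fintype_card, Fintype.card_prod, Fintype.card_embedding_eq]
  simp [hQcard, Nat.descFactorial_self]


theorem count (hm : 2 * m ≤ n) :
    Nat.card {P : Finset (Finset (Fin n)) // Pred n (n - m) P} * (m.factorial * 2 ^ m)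
      = n.descFactorial (2 * m) := by
  classical
  set Fib : {P : Finset (Finset (Fin n)) // Pred n (n - m) P} → Type :=
    fun P => {f : Fin (2 * m) ↪ Fin n //
      ∀ i, ({f (e0 i), f (e1 i)} : Finset (Fin n)) ∈ P.1} with hFib
  have e : (Fin (2 * m) ↪ Fin n) ≃ Σ P, Fib P :=
    { toFun := fun f => ⟨⟨parts f, parts_valid hm f⟩,
        ⟨f, fun i => Finset.mem_union_left _ (Finset.mem_image.2 ⟨i, mem_univ _, rfl⟩)⟩⟩
      invFun := fun x => x.2.1
      left_inv := fun f => rfl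
      right_inv := by
        rintro ⟨⟨P, hP⟩, ⟨f, hf⟩⟩
        have h := parts_eq hm hP f hf
        subst h
        rfl }
  have h1 : Nat.card (Fin (2 * m) ↪ Fin n) = n.descFactorial (2 * m) := by
    rw [Nat.card_eq_fintype_card, Fintype.card_embedding_eq, Fintype.card_fin, Fintype.card_fin]
  rw [← h1, Nat.card_congr e]
  conv_rhs => rw [Nat.card_eq_fintype_card]
  rw [Fintype.card_sigma]
  have h2 : ∀ P, Fintype.card (Fib P) = m.factorial * 2 ^ m := by
    intro P
    rw [← Nat.card_eq_fintype_card]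
    exact fiber_card hm P.2
  rw [Finset.sum_congr rfl fun P _ => h2 P, Finset.sum_const, smul_eq_mul,
    Finset.card_univ, Nat.card_eq_fintype_card]

theorem card_zero (h : ¬(n ≤ 2 * k ∧ k ≤ n)) :
    Nat.card {P : Finset (Finset (Fin n)) // Pred n k P} = 0 := by
  have : IsEmpty {P : Finset (Finset (Fin n)) // Pred n k P} :=
    ⟨fun x => h ⟨x.2.struct.2.1, x.2.struct.2.2⟩⟩
  exact Nat.card_of_isEmpty


theorem besselB_eq (n k : ℕ) :
    besselB n k = Nat.card {P : Finset (Finset (Fin n)) // Pred n k P} := rfl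

theorem besselB_zero {n k : ℕ} (h : ¬(n ≤ 2 * k ∧ k ≤ n)) : besselB n k = 0 := by
  rw [besselB_eq]
  exact card_zero h

theorem bessel_mul {n k : ℕ} (h1 : n ≤ 2 * k) (h2 : k ≤ n) :
    besselB n k * ((n - k).factorial * 2 ^ (n - k) * (n - 2 * (n - k)).factorial)
      = n.factorial := by
  have hc := count (n := n) (m := n - k) (by omega)
  have hk : n - (n - k) = k := by omega
  rw [hk] at hc
  rw [besselB_eq, ← mul_assoc, hc, mul_comm]
  exact Nat.factorial_mul_descFactorial (by omega)

theorem Dsq (p b : ℕ) :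
    ((p+1).factorial * 2 ^ (p+1) * (b+2).factorial) ^ 2
      ≤ ((p+2).factorial * 2 ^ (p+2) * b.factorial)
        * (p.factorial * 2 ^ p * (b+4).factorial) := by
  have h1 : (p+1).factorial = (p+1) * p.factorial := Nat.factorial_succ p
  have h2 : (p+2).factorial = (p+2) * ((p+1) * p.factorial) := by
    rw [Nat.factorial_succ, h1]
  have h3 : (b+1).factorial = (b+1) * b.factorial := Nat.factorial_succ b
  have h4 : (b+2).factorial = (b+2) * ((b+1) * b.factorial) := by
    rw [Nat.factorial_succ, h3]
  have h6 : (b+4).factorial = (b+4) * ((b+3) * ((b+2) * ((b+1) * b.factorial))) := by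
    rw [show b+4 = (b+3)+1 from rfl, Nat.factorial_succ, show b+3 = (b+2)+1 from rfl,
      Nat.factorial_succ, h4]
  rw [h1, h2, h4, h6]
  simp only [pow_succ]
  set P := p.factorial
  set Q := b.factorial
  set T := (2:ℕ) ^ p
  have key : (p+1) * (b+2) * (b+1) ≤ (p+2) * (b+4) * (b+3) :=
    Nat.mul_le_mul (Nat.mul_le_mul (by omega) (by omega)) (by omega)
  calc ((p+1) * P * (T * 2) * ((b+2) * ((b+1) * Q))) ^ 2
      = (((p+1) * (b+2) * (b+1)) * (P * P * (Q * Q) * (T * T * 4)))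
          * ((p+1) * (b+2) * (b+1)) := by ring
    _ ≤ (((p+1) * (b+2) * (b+1)) * (P * P * (Q * Q) * (T * T * 4)))
          * ((p+2) * (b+4) * (b+3)) := Nat.mul_le_mul_left _ key
    _ = ((p+2) * ((p+1) * P) * (T * 2 * 2) * Q)
          * (P * T * ((b+4) * ((b+3) * ((b+2) * ((b+1) * Q))))) := by ring

end BesselAux

open BesselAux in
/-- The Bessel numbers of the second kind form a log-concave sequence in `k`. -/
theorem stmt_9 (n k : ℕ) (hk : 1 ≤ k) :
    besselB n (k - 1) * besselB n (k + 1) ≤ besselB n k ^ 2 := by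
  rcases Nat.eq_zero_or_pos (besselB n (k - 1)) with hA | hA
  · simp [hA]
  rcases Nat.eq_zero_or_pos (besselB n (k + 1)) with hC | hC
  · simp [hC]
  have hc1 : n ≤ 2 * (k - 1) ∧ k - 1 ≤ n := by
    by_contra hc
    rw [besselB_zero hc] at hA
    exact absurd hA (lt_irrefl 0)
  have hc3 : n ≤ 2 * (k + 1) ∧ k + 1 ≤ n := by
    by_contra hc
    rw [besselB_zero hc] at hC
    exact absurd hC (lt_irrefl 0)
  obtain ⟨ha1, _⟩ := hc1
  obtain ⟨_, hb2⟩ := hc3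
  set p := n - k - 1 with hp
  set b := 2 * k - n - 2 with hb
  have h1 := bessel_mul (n := n) (k := k - 1) (by omega) (by omega)
  have h2 := bessel_mul (n := n) (k := k) (by omega) (by omega)
  have h3 := bessel_mul (n := n) (k := k + 1) (by omega) (by omega)
  rw [show n - (k-1) = p + 2 by omega, show n - 2*(p+2) = b by omega] at h1
  rw [show n - k = p + 1 by omega, show n - 2*(p+1) = b + 2 by omega] at h2
  rw [show n - (k+1) = p by omega, show n - 2*p = b + 4 by omega] at h3
  have hDsq := Dsq p b
  set D1 := (p+2).factorial * 2 ^ (p+2) * b.factorial with hD1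
  set D2 := (p+1).factorial * 2 ^ (p+1) * (b+2).factorial with hD2
  set D3 := p.factorial * 2 ^ p * (b+4).factorial with hD3
  have hmain : (besselB n (k-1) * besselB n (k+1)) * (D2 * D2)
      ≤ besselB n k ^ 2 * (D2 * D2) := by
    calc (besselB n (k-1) * besselB n (k+1)) * (D2 * D2)
        ≤ (besselB n (k-1) * besselB n (k+1)) * (D1 * D3) :=
          Nat.mul_le_mul_left _ (by rwa [pow_two] at hDsq)
      _ = (besselB n (k-1) * D1) * (besselB n (k+1) * D3) := by ring
      _ = n.factorial * n.factorial := by rw [h1, h3]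
      _ = (besselB n k * D2) * (besselB n k * D2) := by rw [h2]
      _ = besselB n k ^ 2 * (D2 * D2) := by ring
  have hD2pos : 0 < D2 * D2 := by
    have := Nat.factorial_pos (p+1)
    have := Nat.factorial_pos (b+2)
    have : 0 < D2 := by rw [hD2]; positivity
    positivity
  exact Nat.le_of_mul_le_mul_right hmain hD2pos
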